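/- Let k > 0, μ > 0, and let a, b, ψ be holomorphic on [-1,1] + B(0,μ) ⊂ ℂ with a, b real-valued on [-1,1], ψ verifying the E(k) property with threshold τ_ψ ≤ μ. Let P(x) = Σ_{j=0}^{N₀} a_j x^j be a real polynomial of degree N₀ ≥ 2, d ∈ [-1,1], c ∈ ℝ, with ‖a‖₁ > 0, ‖a‖₁ P̲′(0) < 1, 0 < ‖b + P(0)a‖₁ + |c| < θ(P,a) − P̲(θ(P,a))/P̲′(θ(P,a)), and let r₀ be the smallest nonnegative root of r = ‖a‖₁ P̲(r) + ‖b + P(0)a‖₁ + |c|. Let ν ∈ (0, min(μ, τ_ψ)) satisfy ψ([-1,1]_{k,ν,n+1}) ⊆ [-1,1]_{k,ν,n} for all n ≥ 1. Define F₁ ≡ 0 on [-1,1]_{k,ν,1} and F_{n+1}(z) := c + ∫_{[d,z]} a(ζ) P(F_n(ψ(ζ))) dζ + ∫_{[d,z]} b(ζ) dζ, the integrals taken along the straight segment from d to z. Set M_a := ‖a‖_{∞,[-1,1]+B(0,μ/2)}, M_b := ‖b + P(0)a‖_{∞,[-1,1]+B(0,μ/2)}, and for s ∈ [0, ν/2]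 define ω_{1,s} := 1 and ω_{n+1,s} := M_a P̲(r₀ + s n^{-1/k} ω_{n,s}) + M_b. Suppose C > max(2/ν, 1) satisfies M_a P̲(r₀ + x) + M_b ≤ C (max(x,1))^{N₀} for all x ≥ 0, and suppose s₁ ∈ (0, 1/C] satisfies ψ([-1,1]_{k,s₁,n+1}) ⊆ [-1,1]_{k,s₁,n} for all n ≥ 1. Then for every n ≥ 1, F_n is well defined and holomorphic on [-1,1]_{k,ν,n}, and F_n([-1,1]_{k,s₁,n}) ⊆ {w ∈ ℂ : dist(w, [-r₀,r₀]) ≤ ω_{n,s₁} s₁ n^{-1/k}} ⊆ {w ∈ ℂ : dist(w, [-r₀,r₀]) ≤ C s₁ n^{-1/k}}. -/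

import Mathlib

open Set

/-- The segment `[-1,1]` viewed as a subset of `ℂ`. -/
noncomputable def seg : Set ℂ := Complex.ofReal '' Icc (-1:ℝ) 1

/-- The neighborhood `[-1,1]_{k,A,n} = {z ∈ ℂ : dist(z,[-1,1]) < A n^{-1/k}}`. -/
noncomputable def nbhd (k A : ℝ) (n : ℕ) : Set ℂ :=
  {z : ℂ | Metric.infDist z seg < A * (n:ℝ) ^ (-(1:ℝ)/k)}

/-- The L¹ norm of a function on `[-1,1]`: `‖g‖₁ = ∫_{-1}^{1} |g(t)| dt`. -/
noncomputable def norm1 (g : ℝ → ℝ) : ℝ := ∫ t in (-1:ℝ)..1, |g t|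

/-- The real polynomial `P(x) = Σ_{j=0}^{N₀} a_j x^j`. -/
noncomputable def Pfun (co : ℕ → ℝ) (N₀ : ℕ) : ℝ → ℝ :=
  fun x => ∑ j ∈ Finset.range (N₀+1), co j * x ^ j

/-- The polynomial `P` extended to `ℂ`. -/
noncomputable def PfunC (co : ℕ → ℝ) (N₀ : ℕ) : ℂ → ℂ :=
  fun z => ∑ j ∈ Finset.range (N₀+1), (co j : ℂ) * z ^ j

/-- The associated polynomial `P̲(x) = Σ_{j=1}^{N₀} |a_j| x^j`. -/
noncomputable def Pbar (co : ℕ → ℝ) (N₀ : ℕ) : ℝ → ℝ :=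
  fun x => ∑ j ∈ Finset.Icc 1 N₀, |co j| * x ^ j

/-- Integral of `f` along the straight segment from `w` to `z` in `ℂ`. -/
noncomputable def segInt (f : ℂ → ℂ) (w z : ℂ) : ℂ :=
  (z - w) * ∫ t in (0:ℝ)..1, f (w + (t:ℂ) * (z - w))

/-! ### Auxiliary lemmas -/

section Aux

open scoped Interval

lemma ofReal_hasDerivAt {t : ℝ} : HasDerivAt (fun s : ℝ => (s:ℂ)) 1 t := by
  simpa using (hasDerivAt_id t).ofReal_comp

lemma gamma_mem {U : Set ℂ} (hconv : Convex ℝ U) {d z : ℂ} (hdU : d ∈ U) (hz : z ∈ U)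
    {t : ℝ} (ht : t ∈ Icc (0:ℝ) 1) : d + (t:ℂ) * (z - d) ∈ U := by
  have := hconv hdU hz (by linarith [ht.1, ht.2] : (0:ℝ) ≤ 1 - t) ht.1 (by ring)
  convert this using 1
  simp only [smul_eq_mul, Complex.real_smul]
  push_cast
  ring

lemma uIcc01 : uIcc (0:ℝ) 1 = Icc (0:ℝ) 1 := uIcc_of_le (by norm_num)
lemma uIoc01 : Ι (0:ℝ) 1 = Ioc (0:ℝ) 1 := uIoc_of_le (by norm_num)
lemma uIoc_sub_Icc : Ι (0:ℝ) 1 ⊆ Icc (0:ℝ) 1 := by rw [uIoc01]; exact Ioc_subset_Icc_self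

set_option maxHeartbeats 1000000 in
lemma segInt_hasDerivAt {U : Set ℂ} (hU : IsOpen U) (hconv : Convex ℝ U)
    {g : ℂ → ℂ} (hg : DifferentiableOn ℂ g U) {d z₀ : ℂ} (hdU : d ∈ U) (hz₀ : z₀ ∈ U) :
    HasDerivAt (fun z => segInt g d z) (g z₀) z₀ := by
  have hgc : ContinuousOn g U := hg.continuousOn
  have hga : AnalyticOnNhd ℂ g U := hg.analyticOnNhd hU
  have hdg : ContinuousOn (deriv g) U := hga.deriv.continuousOn
  obtain ⟨ε, hε, hball⟩ := Metric.isOpen_iff.1 hU z₀ hz₀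
  have hε2 : (0:ℝ) < ε/2 := by linarith
  have hcb : Metric.closedBall z₀ (ε/2) ⊆ U :=
    (Metric.closedBall_subset_ball (by linarith)).trans hball
  set γ : ℂ → ℝ → ℂ := fun z t => d + (t:ℂ) * (z - d) with hγ
  have hγmem : ∀ z ∈ U, ∀ t ∈ Icc (0:ℝ) 1, γ z t ∈ U := fun z hz t ht =>
    gamma_mem hconv hdU hz ht
  have hγcont : ∀ z : ℂ, Continuous (fun t : ℝ => γ z t) := by
    intro z
    exact continuous_const.add (Complex.continuous_ofReal.mul continuous_const)
  have hconG : ∀ z ∈ U, ContinuousOn (fun t : ℝ => g (γ z t)) (Icc (0:ℝ) 1) := by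
    intro z hz
    exact hgc.comp (hγcont z).continuousOn (fun t ht => hγmem z hz t ht)
  have hconD : ∀ z ∈ U, ContinuousOn (fun t : ℝ => deriv g (γ z t) * (t:ℂ)) (Icc (0:ℝ) 1) := by
    intro z hz
    exact (hdg.comp (hγcont z).continuousOn (fun t ht => hγmem z hz t ht)).mul
      Complex.continuous_ofReal.continuousOn
  set K : Set ℂ := (fun p : ℝ × ℂ => d + (p.1:ℂ) * (p.2 - d)) ''
    (Icc (0:ℝ) 1 ×ˢ Metric.closedBall z₀ (ε/2)) with hK
  have hKcomp : IsCompact K := (isCompact_Icc.prod (isCompact_closedBall _ _)).image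
    (continuous_const.add ((Complex.continuous_ofReal.comp continuous_fst).mul
      (continuous_snd.sub continuous_const)))
  have hKU : K ⊆ U := by
    rintro w ⟨⟨t, z⟩, ⟨ht, hz⟩, rfl⟩
    exact hγmem z (hcb hz) t ht
  obtain ⟨M, hM⟩ := hKcomp.exists_bound_of_continuousOn (hdg.mono hKU)
  set M₀ : ℝ := max M 0 with hM₀
  have main := intervalIntegral.hasDerivAt_integral_of_dominated_loc_of_deriv_le
    (F := fun z t => g (γ z t)) (F' := fun z t => deriv g (γ z t) * (t:ℂ))
    (x₀ := z₀) (a := 0) (b := 1) (bound := fun _ => M₀) (μ := MeasureTheory.volume) (Metric.ball_mem_nhds z₀ hε2)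
    ?_ ?_ ?_ ?_ ?_ ?_
  · obtain ⟨hint', hG⟩ := main
    have h1 : HasDerivAt (fun z : ℂ => z - d) 1 z₀ := (hasDerivAt_id z₀).sub_const d
    have hprod := h1.mul hG
    have hseg : (fun z => segInt g d z) = fun z => (z - d) * ∫ t in (0:ℝ)..1, g (γ z t) := rfl
    rw [hseg]
    refine hprod.congr_deriv ?_
    have hi1 : IntervalIntegrable (fun t : ℝ => g (γ z₀ t)) MeasureTheory.volume 0 1 :=
      ((hconG z₀ hz₀).mono (le_of_eq uIcc01)).intervalIntegrable
    have hi2 : IntervalIntegrable (fun t : ℝ => deriv g (γ z₀ t) * (t:ℂ))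
        MeasureTheory.volume 0 1 :=
      ((hconD z₀ hz₀).mono (le_of_eq uIcc01)).intervalIntegrable
    have key : (∫ t in (0:ℝ)..1, (g (γ z₀ t) + (z₀ - d) * (deriv g (γ z₀ t) * (t:ℂ))))
        = g z₀ := by
      have hderiv : ∀ t ∈ uIcc (0:ℝ) 1, HasDerivAt (fun s : ℝ => (s:ℂ) * g (γ z₀ s))
          (g (γ z₀ t) + (z₀ - d) * (deriv g (γ z₀ t) * (t:ℂ))) t := by
        rw [uIcc01]
        intro t ht
        have hγd : HasDerivAt (fun s : ℝ => γ z₀ s) (z₀ - d) t := by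
          simpa [hγ] using (ofReal_hasDerivAt.mul_const (z₀ - d)).const_add d
        have hgat : HasDerivAt g (deriv g (γ z₀ t)) (γ z₀ t) :=
          ((hg.differentiableAt (hU.mem_nhds (hγmem z₀ hz₀ t ht))).hasDerivAt)
        have hcomp : HasDerivAt (fun s : ℝ => g (γ z₀ s))
            ((z₀ - d) • deriv g (γ z₀ t)) t := hgat.scomp t hγd
        have := (ofReal_hasDerivAt (t := t)).mul hcomp
        refine this.congr_deriv ?_
        simp only [smul_eq_mul]
        ring
      have hint : IntervalIntegrable
          (fun t : ℝ => g (γ z₀ t) + (z₀ - d) * (deriv g (γ z₀ t) * (t:ℂ)))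
          MeasureTheory.volume 0 1 := hi1.add (hi2.const_mul _)
      have := intervalIntegral.integral_eq_sub_of_hasDerivAt hderiv hint
      rw [this]
      simp [hγ]
    rw [intervalIntegral.integral_add hi1 (hi2.const_mul _),
      intervalIntegral.integral_const_mul] at key
    rw [← key]
    ring
  · filter_upwards [Metric.ball_mem_nhds z₀ hε2] with x hx
    have hxU : x ∈ U := hcb (Metric.ball_subset_closedBall hx)
    exact (((hconG x hxU).mono uIoc_sub_Icc)).aestronglyMeasurable measurableSet_uIoc
  · exact ((hconG z₀ hz₀).mono (le_of_eq uIcc01)).intervalIntegrable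
  · exact (((hconD z₀ hz₀).mono uIoc_sub_Icc)).aestronglyMeasurable measurableSet_uIoc
  · refine MeasureTheory.ae_of_all _ (fun t ht x hx => ?_)
    have ht' : t ∈ Icc (0:ℝ) 1 := uIoc_sub_Icc ht
    have hmem : γ x t ∈ K := ⟨⟨t, x⟩, ⟨ht', Metric.ball_subset_closedBall hx⟩, rfl⟩
    have h1 : ‖deriv g (γ x t)‖ ≤ M := hM _ hmem
    have h2 : ‖(t:ℂ)‖ ≤ 1 := by
      rw [Complex.norm_real, Real.norm_eq_abs, abs_of_nonneg ht'.1]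
      exact ht'.2
    calc ‖deriv g (γ x t) * (t:ℂ)‖ = ‖deriv g (γ x t)‖ * ‖(t:ℂ)‖ := norm_mul _ _
      _ ≤ M * 1 := mul_le_mul h1 h2 (norm_nonneg _) ((norm_nonneg _).trans h1)
      _ ≤ M₀ := by rw [mul_one]; exact le_max_left _ _
  · exact intervalIntegrable_const
  · refine MeasureTheory.ae_of_all _ (fun t ht x hx => ?_)
    have ht' : t ∈ Icc (0:ℝ) 1 := uIoc_sub_Icc ht
    have hxU : x ∈ U := hcb (Metric.ball_subset_closedBall hx)
    have hinner : HasDerivAt (fun z : ℂ => γ z t) (t:ℂ) x := by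
      have : HasDerivAt (fun z : ℂ => d + (t:ℂ) * (z - d)) ((t:ℂ) * 1) x :=
        (((hasDerivAt_id x).sub_const d).const_mul _).const_add d
      simpa [hγ] using this
    have hgat : HasDerivAt g (deriv g (γ x t)) (γ x t) :=
      (hg.differentiableAt (hU.mem_nhds (hγmem x hxU t ht'))).hasDerivAt
    exact hgat.comp x hinner

lemma seg_nonempty : seg.Nonempty := ⟨0, 0, by norm_num, by norm_num⟩

lemma seg_compact : IsCompact seg := (isCompact_Icc).image Complex.continuous_ofReal

lemma seg_convex : Convex ℝ seg := by
  have : seg = Complex.ofRealAm.toLinearMap '' Icc (-1:ℝ) 1 := by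
    simp only [seg, AlgHom.toLinearMap_apply]; rfl
  rw [this]
  exact (convex_Icc _ _).linear_image _

lemma mem_seg {x : ℝ} (hx : x ∈ Icc (-1:ℝ) 1) : (x:ℂ) ∈ seg := ⟨x, hx, rfl⟩

lemma nbhd_eq_thickening {k A : ℝ} {n : ℕ} :
    nbhd k A n = Metric.thickening (A * (n:ℝ) ^ (-(1:ℝ)/k)) seg := by
  ext z
  rw [Metric.mem_thickening_iff_infDist_lt seg_nonempty]
  rfl

lemma nbhd_open {k A : ℝ} {n : ℕ} : IsOpen (nbhd k A n) := by
  rw [nbhd_eq_thickening]; exact Metric.isOpen_thickening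

lemma nbhd_convex {k A : ℝ} {n : ℕ} : Convex ℝ (nbhd k A n) := by
  rw [nbhd_eq_thickening]; exact seg_convex.thickening _

lemma rpow_pos {k : ℝ} (hk : 0 < k) {n : ℕ} (hn : 1 ≤ n) :
    0 < (n:ℝ) ^ (-(1:ℝ)/k) :=
  Real.rpow_pos_of_pos (by exact_mod_cast hn) _

lemma rpow_le_one {k : ℝ} (hk : 0 < k) {n : ℕ} (hn : 1 ≤ n) :
    (n:ℝ) ^ (-(1:ℝ)/k) ≤ 1 :=
  Real.rpow_le_one_of_one_le_of_nonpos (by exact_mod_cast hn)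
    (by rw [neg_div]; exact neg_nonpos.2 (by positivity))

lemma seg_subset_nbhd {k A : ℝ} (hA : 0 < A) {n : ℕ} (hn : 1 ≤ n) : seg ⊆ nbhd k A n := by
  intro z hz
  have : Metric.infDist z seg = 0 := Metric.infDist_zero_of_mem hz
  simp only [nbhd, mem_setOf_eq, this]
  positivity

lemma nbhd_mono {k A A' : ℝ} (h : A ≤ A') {n : ℕ} : nbhd k A n ⊆ nbhd k A' n := by
  intro z hz
  simp only [nbhd, mem_setOf_eq] at hz ⊢
  refine lt_of_lt_of_le hz ?_
  exact mul_le_mul_of_nonneg_right h (Real.rpow_nonneg (Nat.cast_nonneg n) _)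

lemma nbhd_subset_thickening {k A δ : ℝ} (hk : 0 < k) {n : ℕ} (hn : 1 ≤ n)
    (hA : 0 ≤ A) (hδ : A ≤ δ) : nbhd k A n ⊆ Metric.thickening δ seg := by
  rw [nbhd_eq_thickening]
  apply Metric.thickening_mono
  calc A * (n:ℝ) ^ (-(1:ℝ)/k) ≤ A * 1 := by
        exact mul_le_mul_of_nonneg_left (rpow_le_one hk hn) hA
    _ ≤ δ := by rw [mul_one]; exact hδ

lemma seg_mem_of_infDist_zero {z : ℂ} (h : Metric.infDist z seg ≤ 0) : z ∈ seg := by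
  have hc : IsClosed seg := seg_compact.isClosed
  rw [hc.mem_iff_infDist_zero seg_nonempty]
  exact le_antisymm h Metric.infDist_nonneg

lemma PfunC_diff (co : ℕ → ℝ) (N₀ : ℕ) : Differentiable ℂ (PfunC co N₀) := by
  apply Differentiable.fun_sum
  intro j _
  exact (differentiable_pow j).const_mul _

lemma PfunC_zero (co : ℕ → ℝ) (N₀ : ℕ) : PfunC co N₀ 0 = (co 0 : ℂ) := by
  simp [PfunC, Finset.sum_range_succ']

lemma Pfun_zero (co : ℕ → ℝ) (N₀ : ℕ) : Pfun co N₀ 0 = co 0 := by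
  simp [Pfun, Finset.sum_range_succ']

lemma Pbar_nonneg (co : ℕ → ℝ) (N₀ : ℕ) {x : ℝ} (hx : 0 ≤ x) : 0 ≤ Pbar co N₀ x :=
  Finset.sum_nonneg fun j _ => mul_nonneg (abs_nonneg _) (pow_nonneg hx _)

lemma Pbar_mono (co : ℕ → ℝ) (N₀ : ℕ) {x y : ℝ} (hx : 0 ≤ x) (hxy : x ≤ y) :
    Pbar co N₀ x ≤ Pbar co N₀ y :=
  Finset.sum_le_sum fun j _ => mul_le_mul_of_nonneg_left
    (pow_le_pow_left₀ hx hxy j) (abs_nonneg _)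

lemma PfunC_sub_zero (co : ℕ → ℝ) (N₀ : ℕ) (w : ℂ) :
    PfunC co N₀ w - PfunC co N₀ 0 = ∑ j ∈ Finset.Icc 1 N₀, (co j : ℂ) * w ^ j := by
  rw [PfunC_zero]
  have h1 : PfunC co N₀ w = (∑ i ∈ Finset.range N₀, (co (i+1) : ℂ) * w ^ (i+1)) + co 0 := by
    simp [PfunC, Finset.sum_range_succ']
  have h2 : ∑ j ∈ Finset.Icc 1 N₀, (co j : ℂ) * w ^ j
      = ∑ i ∈ Finset.range N₀, (co (1+i) : ℂ) * w ^ (1+i) := by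
    rw [← Finset.Ico_add_one_right_eq_Icc, Finset.sum_Ico_eq_sum_range]
    simp
  rw [h1, h2]
  simp only [add_comm 1]
  ring

lemma PfunC_sub_zero_bound (co : ℕ → ℝ) (N₀ : ℕ) (w : ℂ) :
    ‖PfunC co N₀ w - PfunC co N₀ 0‖ ≤ Pbar co N₀ (‖w‖) := by
  rw [PfunC_sub_zero]
  calc ‖∑ j ∈ Finset.Icc 1 N₀, (co j : ℂ) * w ^ j‖
      ≤ ∑ j ∈ Finset.Icc 1 N₀, ‖(co j : ℂ) * w ^ j‖ :=
        by simpa using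
          norm_sum_le (Finset.Icc 1 N₀) (fun j => (co j : ℂ) * w ^ j)
    _ = ∑ j ∈ Finset.Icc 1 N₀, |co j| * ‖w‖ ^ j := by
        apply Finset.sum_congr rfl
        intro j _
        rw [norm_mul, norm_pow, Complex.norm_real, Real.norm_eq_abs]
    _ = Pbar co N₀ (‖w‖) := rfl

lemma real_of_im_zero {z : ℂ} (h : z.im = 0) : z = (z.re : ℂ) := Complex.ext rfl (by simp [h])

lemma abs_of_im_zero {z : ℂ} (h : z.im = 0) : ‖z‖ = |z.re| := by
  rw [real_of_im_zero h, Complex.norm_real, Real.norm_eq_abs]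
  simp

lemma intervalIntegral_im {f : ℝ → ℂ} {a b : ℝ}
    (hf : IntervalIntegrable f MeasureTheory.volume a b) :
    (∫ t in a..b, f t).im = ∫ t in a..b, (f t).im := by
  simp only [intervalIntegral, Complex.sub_im]
  have h1 := integral_im (𝕜 := ℂ) hf.1
  have h2 := integral_im (𝕜 := ℂ) hf.2
  simp only [RCLike.im_to_complex] at h1 h2
  rw [← h1, ← h2]

lemma PfunC_ofReal (co : ℕ → ℝ) (N₀ : ℕ) (x : ℝ) :
    PfunC co N₀ (x : ℂ) = ((Pfun co N₀ x : ℝ) : ℂ) := by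
  simp only [PfunC, Pfun]
  push_cast
  rfl

lemma sup_bound {μ : ℝ} (hμ : 0 < μ) {f : ℂ → ℂ}
    (hf : ContinuousOn f (Metric.thickening μ seg)) :
    (0 ≤ sSup ((fun z => ‖f z‖) '' Metric.thickening (μ/2) seg)) ∧
    ∀ z ∈ Metric.thickening (μ/2) seg,
      ‖f z‖ ≤ sSup ((fun z => ‖f z‖) '' Metric.thickening (μ/2) seg) := by
  set T := Metric.cthickening (μ/2) seg with hT
  have hTc : IsCompact T := seg_compact.cthickening
  have hTsub : T ⊆ Metric.thickening μ seg :=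
    Metric.cthickening_subset_thickening' hμ (half_lt_self hμ) _
  have hcont : ContinuousOn (fun z => ‖f z‖) T :=
    (continuous_norm.comp_continuousOn (hf.mono hTsub))
  have himg : IsCompact ((fun z => ‖f z‖) '' T) := hTc.image_of_continuousOn hcont
  have hbdd : BddAbove ((fun z => ‖f z‖) '' Metric.thickening (μ/2) seg) :=
    himg.bddAbove.mono (image_mono (Metric.thickening_subset_cthickening _ _))
  have hle : ∀ z ∈ Metric.thickening (μ/2) seg, ‖f z‖
      ≤ sSup ((fun z => ‖f z‖) '' Metric.thickening (μ/2) seg) :=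
    fun z hz => le_csSup hbdd (mem_image_of_mem _ hz)
  refine ⟨?_, hle⟩
  obtain ⟨z₀, hz₀⟩ := seg_nonempty
  have hz₀' : z₀ ∈ Metric.thickening (μ/2) seg :=
    Metric.self_subset_thickening (by linarith) _ hz₀
  exact le_trans (norm_nonneg _) (hle z₀ hz₀')

lemma segInt_add {f h : ℂ → ℂ} {w z : ℂ}
    (hf : IntervalIntegrable (fun t : ℝ => f (w + (t:ℂ) * (z - w))) MeasureTheory.volume 0 1)
    (hh : IntervalIntegrable (fun t : ℝ => h (w + (t:ℂ) * (z - w))) MeasureTheory.volume 0 1) :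
    segInt (fun ζ => f ζ + h ζ) w z = segInt f w z + segInt h w z := by
  simp only [segInt]
  rw [intervalIntegral.integral_add hf hh]
  ring

lemma segInt_congr {f h : ℂ → ℂ} {w z : ℂ}
    (heq : ∀ t ∈ Icc (0:ℝ) 1, f (w + (t:ℂ) * (z - w)) = h (w + (t:ℂ) * (z - w))) :
    segInt f w z = segInt h w z := by
  simp only [segInt]
  congr 1
  refine intervalIntegral.integral_congr ?_
  rw [uIcc01]
  exact fun t ht => heq t ht

lemma cast_gamma (d x t : ℝ) : (d:ℂ) + (t:ℂ) * ((x:ℂ) - (d:ℂ)) = ((d + t*(x-d) : ℝ) : ℂ) := by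
  push_cast; ring

lemma gamma_mem_Icc {d x t : ℝ} (hd : d ∈ Icc (-1:ℝ) 1) (hx : x ∈ Icc (-1:ℝ) 1)
    (ht : t ∈ Icc (0:ℝ) 1) : d + t * (x - d) ∈ Icc (-1:ℝ) 1 := by
  constructor
  · nlinarith [hd.1, hd.2, hx.1, hx.2, ht.1, ht.2]
  · nlinarith [hd.1, hd.2, hx.1, hx.2, ht.1, ht.2]

lemma segInt_im_zero {f : ℂ → ℂ} {d x : ℝ}
    (him : ∀ t ∈ Icc (0:ℝ) 1, (f ((d:ℂ) + (t:ℂ) * ((x:ℂ) - (d:ℂ)))).im = 0)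
    (hint : IntervalIntegrable (fun t : ℝ => f ((d:ℂ) + (t:ℂ) * ((x:ℂ) - (d:ℂ))))
      MeasureTheory.volume 0 1) :
    (segInt f (d:ℂ) (x:ℂ)).im = 0 := by
  rw [segInt, Complex.mul_im]
  have hzim : ((x:ℂ) - (d:ℂ)).im = 0 := by simp
  have hI : (∫ t in (0:ℝ)..1, f ((d:ℂ) + (t:ℂ) * ((x:ℂ) - (d:ℂ)))).im = 0 := by
    rw [intervalIntegral_im hint]
    have : ∫ t in (0:ℝ)..1, (f ((d:ℂ) + (t:ℂ) * ((x:ℂ) - (d:ℂ)))).im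
        = ∫ t in (0:ℝ)..1, (0:ℝ) := by
      refine intervalIntegral.integral_congr ?_
      rw [uIcc01]
      exact fun t ht => him t ht
    rw [this]
    simp
  rw [hzim, hI]
  ring

lemma segInt_abs_le {f : ℂ → ℂ} {d x : ℝ} (hd : d ∈ Icc (-1:ℝ) 1) (hx : x ∈ Icc (-1:ℝ) 1)
    {bnd : ℝ → ℝ}
    (hfc : ContinuousOn (fun t : ℝ => f (t:ℂ)) (Icc (-1:ℝ) 1))
    (hbc : ContinuousOn bnd (Icc (-1:ℝ) 1))
    (hfb : ∀ t ∈ Icc (-1:ℝ) 1, ‖f (t:ℂ)‖ ≤ bnd t)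
    (hbnn : ∀ t ∈ Icc (-1:ℝ) 1, 0 ≤ bnd t) :
    ‖segInt f (d:ℂ) (x:ℂ)‖ ≤ ∫ t in (-1:ℝ)..1, bnd t := by
  have hbint : IntervalIntegrable bnd MeasureTheory.volume (-1) 1 :=
    (hbc.mono (le_of_eq (uIcc_of_le (by norm_num)))).intervalIntegrable
  have hIbnn : (0:ℝ) ≤ ∫ t in (-1:ℝ)..1, bnd t :=
    intervalIntegral.integral_nonneg (by norm_num) (fun t ht => hbnn t ht)
  rcases eq_or_ne x d with rfl | hxd
  · simp [segInt, hIbnn]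
  have hγc : Continuous (fun t : ℝ => d + t * (x - d)) := by continuity
  have hγmem : ∀ t ∈ Icc (0:ℝ) 1, d + t * (x - d) ∈ Icc (-1:ℝ) 1 :=
    fun t ht => gamma_mem_Icc hd hx ht
  have hfγc : ContinuousOn (fun t : ℝ => f ((d:ℂ) + (t:ℂ) * ((x:ℂ) - (d:ℂ)))) (Icc (0:ℝ) 1) := by
    have : ContinuousOn (fun t : ℝ => f (((d + t * (x - d) : ℝ)):ℂ)) (Icc (0:ℝ) 1) :=
      hfc.comp hγc.continuousOn hγmem
    refine this.congr (fun t ht => ?_)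
    rw [cast_gamma]
  have hbγc : ContinuousOn (fun t : ℝ => bnd (d + t * (x - d))) (Icc (0:ℝ) 1) :=
    hbc.comp hγc.continuousOn hγmem
  have hfint : IntervalIntegrable (fun t : ℝ => f ((d:ℂ) + (t:ℂ) * ((x:ℂ) - (d:ℂ))))
      MeasureTheory.volume 0 1 :=
    (hfγc.mono (le_of_eq (uIcc_of_le (by norm_num)))).intervalIntegrable
  have hbγint : IntervalIntegrable (fun t : ℝ => bnd (d + t * (x - d)))
      MeasureTheory.volume 0 1 :=
    (hbγc.mono (le_of_eq (uIcc_of_le (by norm_num)))).intervalIntegrable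
  have step1 : ‖segInt f (d:ℂ) (x:ℂ)‖
      ≤ |x - d| * ∫ t in (0:ℝ)..1, bnd (d + t * (x - d)) := by
    rw [segInt, norm_mul]
    have h1 : ‖(x:ℂ) - (d:ℂ)‖ = |x - d| := by
      rw [← Complex.ofReal_sub, Complex.norm_real, Real.norm_eq_abs]
    rw [h1]
    refine mul_le_mul_of_nonneg_left ?_ (abs_nonneg _)
    calc ‖∫ t in (0:ℝ)..1, f ((d:ℂ) + (t:ℂ) * ((x:ℂ) - (d:ℂ)))‖
        ≤ ∫ t in (0:ℝ)..1, ‖f ((d:ℂ) + (t:ℂ) * ((x:ℂ) - (d:ℂ)))‖ := by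
          simpa using
            intervalIntegral.norm_integral_le_integral_norm
              (f := fun t : ℝ => f ((d:ℂ) + (t:ℂ) * ((x:ℂ) - (d:ℂ)))) (by norm_num : (0:ℝ) ≤ 1)
      _ ≤ ∫ t in (0:ℝ)..1, bnd (d + t * (x - d)) := by
          refine intervalIntegral.integral_mono_on (by norm_num) hfint.norm hbγint
            (fun t ht => ?_)
          rw [cast_gamma]
          simpa using hfb _ (hγmem t ht)
  refine step1.trans ?_
  have hsub : ∫ t in (0:ℝ)..1, bnd (d + t * (x - d))
      = (x - d)⁻¹ * ∫ t in d..x, bnd t := by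
    have := intervalIntegral.integral_comp_add_mul bnd (sub_ne_zero.2 hxd) d
      (a := 0) (b := 1)
    simpa [smul_eq_mul, mul_comm] using this
  set J := ∫ t in (0:ℝ)..1, bnd (d + t * (x - d)) with hJ
  have hJnn : (0:ℝ) ≤ J := intervalIntegral.integral_nonneg (by norm_num)
    (fun t ht => hbnn _ (hγmem t ht))
  have hIx : (x - d) * J = ∫ t in d..x, bnd t := by
    rw [hsub, ← mul_assoc, mul_inv_cancel₀ (sub_ne_zero.2 hxd), one_mul]
  have heq : |x - d| * J = |∫ t in d..x, bnd t| := by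
    rw [← hIx, abs_mul, abs_of_nonneg hJnn]
  rw [heq]
  have hmono : |∫ t in d..x, bnd t| ≤ |∫ t in (-1:ℝ)..1, bnd t| := by
    refine intervalIntegral.abs_integral_mono_interval ?_ ?_ hbint
    · have h1 : Ι d x = Ioc (min d x) (max d x) := rfl
      have h2 : Ι (-1:ℝ) 1 = Ioc (-1:ℝ) 1 := by
        rw [uIoc_of_le (by norm_num : (-1:ℝ) ≤ 1)]
      rw [h1, h2]
      exact Ioc_subset_Ioc (le_min hd.1 hx.1) (max_le hd.2 hx.2)
    · filter_upwards [MeasureTheory.ae_restrict_mem measurableSet_uIoc] with t ht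
      have : t ∈ Icc (-1:ℝ) 1 := by
        rw [uIoc_of_le (by norm_num : (-1:ℝ) ≤ 1)] at ht
        exact Ioc_subset_Icc_self ht
      simpa using hbnn t this
  rw [abs_of_nonneg hIbnn] at hmono
  exact hmono

end Aux

/-- Proposition 4.1 of the paper: each `F_n` is well defined and holomorphic on
`[-1,1]_{k,ν,n}`, and `F_n([-1,1]_{k,s₁,n})` is contained in the
`ω_{n,s₁} s₁ n^{-1/k}`-neighborhood (hence in the `C s₁ n^{-1/k}`-neighborhood) of
`[-r₀,r₀]`. -/
theorem stmt9 (k : ℝ) (hk : 0 < k) (μ : ℝ) (hμ : 0 < μ) (A B Ψ : ℂ → ℂ)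
    (hA : DifferentiableOn ℂ A (Metric.thickening μ seg))
    (hB : DifferentiableOn ℂ B (Metric.thickening μ seg))
    (hΨ : DifferentiableOn ℂ Ψ (Metric.thickening μ seg))
    (hAreal : ∀ t ∈ Icc (-1:ℝ) 1, (A t).im = 0)
    (hBreal : ∀ t ∈ Icc (-1:ℝ) 1, (B t).im = 0)
    (τψ : ℝ) (hτψ : 0 < τψ) (hτψμ : τψ ≤ μ)
    (hΨE : ∀ A' ∈ Set.Ioc (0:ℝ) τψ, ∃ N : ℕ, 1 ≤ N ∧
      ∀ p : ℕ, N ≤ p → Ψ '' nbhd k A' (p+1) ⊆ nbhd k A' p)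
    (a b ψ : ℝ → ℝ)
    (haA : ∀ t : ℝ, a t = (A t).re) (hbB : ∀ t : ℝ, b t = (B t).re)
    (hψΨ : ∀ t : ℝ, ψ t = (Ψ t).re)
    (N₀ : ℕ) (hN₀ : 2 ≤ N₀) (co : ℕ → ℝ) (hlead : co N₀ ≠ 0)
    (d : ℝ) (hd : d ∈ Icc (-1:ℝ) 1) (c : ℝ)
    (ha1 : 0 < norm1 a)
    (hsmall : norm1 a * deriv (Pbar co N₀) 0 < 1)
    (θ : ℝ) (hθpos : 0 < θ) (hθ : norm1 a * deriv (Pbar co N₀) θ = 1)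
    (hcond1 : 0 < norm1 (fun t => b t + Pfun co N₀ 0 * a t) + |c|)
    (hcond2 : norm1 (fun t => b t + Pfun co N₀ 0 * a t) + |c|
      < θ - Pbar co N₀ θ / deriv (Pbar co N₀) θ)
    (r₀ : ℝ)
    (hr₀ : IsLeast {r : ℝ | 0 ≤ r ∧
      r = norm1 a * Pbar co N₀ r + norm1 (fun t => b t + Pfun co N₀ 0 * a t) + |c|} r₀)
    (ν : ℝ) (hν0 : 0 < ν) (hνlt : ν < min μ τψ)
    (hνΨ : ∀ n : ℕ, 1 ≤ n → Ψ '' nbhd k ν (n+1) ⊆ nbhd k ν n)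
    (F : ℕ → ℂ → ℂ)
    (hF1 : ∀ z ∈ nbhd k ν 1, F 1 z = 0)
    (hFrec : ∀ n : ℕ, 1 ≤ n → ∀ z ∈ nbhd k ν (n+1),
      F (n+1) z = (c:ℂ) + segInt (fun ζ => A ζ * PfunC co N₀ (F n (Ψ ζ))) (d:ℂ) z
        + segInt B (d:ℂ) z)
    (Ma Mb : ℝ)
    (hMa : Ma = sSup ((fun z => ‖A z‖) '' Metric.thickening (μ/2) seg))
    (hMb : Mb = sSup ((fun z => ‖B z + PfunC co N₀ 0 * A z‖)
      '' Metric.thickening (μ/2) seg))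
    (ω : ℕ → ℝ) (hω1 : ω 1 = 1)
    (s₁ : ℝ)
    (hωrec : ∀ n : ℕ, 1 ≤ n →
      ω (n+1) = Ma * Pbar co N₀ (r₀ + s₁ * (n:ℝ) ^ (-(1:ℝ)/k) * ω n) + Mb)
    (C : ℝ) (hC : max (2/ν) 1 < C)
    (hCQ : ∀ x : ℝ, 0 ≤ x →
      Ma * Pbar co N₀ (r₀ + x) + Mb ≤ C * (max x 1) ^ N₀)
    (hs₁0 : 0 < s₁) (hs₁C : s₁ ≤ 1 / C)
    (hs₁Ψ : ∀ n : ℕ, 1 ≤ n → Ψ '' nbhd k s₁ (n+1) ⊆ nbhd k s₁ n) :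
    ∀ n : ℕ, 1 ≤ n →
      DifferentiableOn ℂ (F n) (nbhd k ν n) ∧
      (∀ z ∈ nbhd k s₁ n,
        Metric.infDist (F n z) (Complex.ofReal '' Icc (-r₀) r₀)
          ≤ ω n * (s₁ * (n:ℝ) ^ (-(1:ℝ)/k))) ∧
      (∀ z ∈ nbhd k s₁ n,
        Metric.infDist (F n z) (Complex.ofReal '' Icc (-r₀) r₀)
          ≤ C * (s₁ * (n:ℝ) ^ (-(1:ℝ)/k))) := by
  -- basic facts
  have hr₀nn : 0 ≤ r₀ := hr₀.1.1
  have hr₀eq : r₀ = norm1 a * Pbar co N₀ r₀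
      + norm1 (fun t => b t + Pfun co N₀ 0 * a t) + |c| := hr₀.1.2
  have hC1 : 1 < C := lt_of_le_of_lt (le_max_right _ _) hC
  have hC0 : 0 < C := lt_trans one_pos hC1
  have h2ν : 2/ν < C := lt_of_le_of_lt (le_max_left _ _) hC
  have hνμ : ν < μ := lt_of_lt_of_le hνlt (min_le_left _ _)
  have hs₁ν2 : s₁ < ν/2 := by
    have h1 : 2 < C * ν := (div_lt_iff₀ hν0).mp h2ν
    have h2 : 1/C < ν/2 := by
      rw [div_lt_div_iff₀ hC0 (by norm_num : (0:ℝ) < 2)]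
      linarith
    linarith [hs₁C]
  have hs₁ν : s₁ < ν := by linarith
  have hs₁μ2 : s₁ < μ/2 := by linarith
  set S : Set ℂ := Complex.ofReal '' Icc (-r₀) r₀ with hSdef
  have hSne : S.Nonempty := ⟨0, 0, ⟨by linarith, hr₀nn⟩, by simp⟩
  have hScomp : IsCompact S := isCompact_Icc.image Complex.continuous_ofReal
  have h0S : (0:ℂ) ∈ S := ⟨0, ⟨by linarith, hr₀nn⟩, by simp⟩
  have hSabs : ∀ y ∈ S, ‖y‖ ≤ r₀ := by
    rintro y ⟨u, hu, rfl⟩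
    rw [Complex.norm_real, Real.norm_eq_abs]
    exact abs_le.2 ⟨by linarith [hu.1], hu.2⟩
  have hmemS : ∀ w : ℂ, w.im = 0 → ‖w‖ ≤ r₀ → w ∈ S := by
    intro w h1 h2
    refine ⟨w.re, ?_, (real_of_im_zero h1).symm⟩
    rw [abs_of_im_zero h1] at h2
    exact ⟨(abs_le.1 h2).1, (abs_le.1 h2).2⟩
  -- bounds by Ma and Mb
  have hacont : ContinuousOn A (Metric.thickening μ seg) := hA.continuousOn
  have hMa' := sup_bound hμ hacont
  rw [← hMa] at hMa'
  obtain ⟨hMa0, hMabd⟩ := hMa'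
  have hh₂c : ContinuousOn (fun z => B z + PfunC co N₀ 0 * A z) (Metric.thickening μ seg) :=
    hB.continuousOn.add (continuousOn_const.mul hacont)
  have hMb' := sup_bound hμ hh₂c
  rw [← hMb] at hMb'
  obtain ⟨hMb0, hMbbd⟩ := hMb'
  -- Ψ maps the segment into itself
  have hΨseg : ∀ z ∈ seg, Ψ z ∈ seg := by
    intro z hz
    have hbnd : ∀ n : ℕ, 1 ≤ n → Metric.infDist (Ψ z) seg < s₁ * (n:ℝ) ^ (-(1:ℝ)/k) := by
      intro n hn
      have hz' : z ∈ nbhd k s₁ (n+1) := seg_subset_nbhd hs₁0 (by omega) hz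
      exact hs₁Ψ n hn (mem_image_of_mem Ψ hz')
    have htend : Filter.Tendsto (fun n : ℕ => s₁ * (n:ℝ) ^ (-(1:ℝ)/k))
        Filter.atTop (nhds 0) := by
      have h1 : Filter.Tendsto (fun x : ℝ => x ^ (-(1/k))) Filter.atTop (nhds 0) :=
        tendsto_rpow_neg_atTop (by positivity)
      have h2 : Filter.Tendsto (fun n : ℕ => ((n:ℝ)) ^ (-(1:ℝ)/k)) Filter.atTop (nhds 0) := by
        have := h1.comp (tendsto_natCast_atTop_atTop (R := ℝ))
        simpa [Function.comp_def, neg_div] using this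
      simpa using h2.const_mul s₁
    have hle : Metric.infDist (Ψ z) seg ≤ 0 := by
      refine ge_of_tendsto htend ?_
      filter_upwards [Filter.eventually_ge_atTop 1] with n hn
      exact (hbnd n hn).le
    exact seg_mem_of_infDist_zero hle
  have hdseg : (d:ℂ) ∈ seg := mem_seg hd
  -- continuity of a and b on [-1,1]
  have hsegthick : ∀ {t : ℝ}, t ∈ Icc (-1:ℝ) 1 → ((t:ℝ):ℂ) ∈ Metric.thickening μ seg :=
    fun {t} ht => Metric.self_subset_thickening hμ _ (mem_seg ht)
  have hAIcc : ContinuousOn (fun t : ℝ => A (t:ℂ)) (Icc (-1:ℝ) 1) :=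
    hacont.comp Complex.continuous_ofReal.continuousOn (fun t ht => hsegthick ht)
  have hBIcc : ContinuousOn (fun t : ℝ => B (t:ℂ)) (Icc (-1:ℝ) 1) :=
    hB.continuousOn.comp Complex.continuous_ofReal.continuousOn (fun t ht => hsegthick ht)
  have hacontIcc : ContinuousOn a (Icc (-1:ℝ) 1) :=
    (Complex.continuous_re.comp_continuousOn hAIcc).congr (fun t ht => haA t)
  have hbcontIcc : ContinuousOn b (Icc (-1:ℝ) 1) :=
    (Complex.continuous_re.comp_continuousOn hBIcc).congr (fun t ht => hbB t)
  have hAre : ∀ s : ℝ, s ∈ Icc (-1:ℝ) 1 → A (s:ℂ) = ((a s : ℝ) : ℂ) := by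
    intro s hs
    rw [haA s]
    exact real_of_im_zero (hAreal s hs)
  have hBre : ∀ s : ℝ, s ∈ Icc (-1:ℝ) 1 → B (s:ℂ) = ((b s : ℝ) : ℂ) := by
    intro s hs
    rw [hbB s]
    exact real_of_im_zero (hBreal s hs)
  -- the strengthened induction
  have key : ∀ n : ℕ, 1 ≤ n →
      DifferentiableOn ℂ (F n) (nbhd k ν n) ∧
      (∀ x : ℝ, x ∈ Icc (-1:ℝ) 1 → (F n (x:ℂ)).im = 0 ∧ ‖F n (x:ℂ)‖ ≤ r₀) ∧
      (∀ z ∈ nbhd k s₁ n, Metric.infDist (F n z) S ≤ ω n * (s₁ * (n:ℝ) ^ (-(1:ℝ)/k))) ∧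
      (0 ≤ ω n ∧ ω n ≤ C) := by
    intro n hn
    induction n, hn using Nat.le_induction with
    | base =>
      refine ⟨?_, ?_, ?_, ?_, ?_⟩
      · exact (differentiableOn_const (0:ℂ)).congr (fun z hz => hF1 z hz)
      · intro x hx
        have h0 : F 1 (x:ℂ) = 0 := hF1 _ (seg_subset_nbhd hν0 le_rfl (mem_seg hx))
        rw [h0]
        simp [hr₀nn]
      · intro z hz
        have hz' : z ∈ nbhd k ν 1 := nbhd_mono hs₁ν.le hz
        rw [hF1 z hz', Metric.infDist_zero_of_mem h0S, hω1, one_mul]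
        positivity
      · rw [hω1]; norm_num
      · rw [hω1]; exact hC1.le
    | succ n hn ih =>
      obtain ⟨ihdiff, ihseg, ihbound, ihω⟩ := ih
      have hn1 : 1 ≤ n + 1 := by omega
      have hUopen : IsOpen (nbhd k ν (n+1)) := nbhd_open
      have hUconv : Convex ℝ (nbhd k ν (n+1)) := nbhd_convex
      have hsegU : seg ⊆ nbhd k ν (n+1) := seg_subset_nbhd hν0 hn1
      have hdU : (d:ℂ) ∈ nbhd k ν (n+1) := hsegU hdseg
      have hUμ : nbhd k ν (n+1) ⊆ Metric.thickening μ seg :=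
        nbhd_subset_thickening hk hn1 hν0.le hνμ.le
      set g₁ : ℂ → ℂ := fun ζ => A ζ * PfunC co N₀ (F n (Ψ ζ)) with hg₁def
      set g : ℂ → ℂ := fun ζ => A ζ * PfunC co N₀ (F n (Ψ ζ)) + B ζ with hgdef
      set h₁ : ℂ → ℂ := fun ζ => A ζ * (PfunC co N₀ (F n (Ψ ζ)) - PfunC co N₀ 0) with hh₁def
      set h₂ : ℂ → ℂ := fun ζ => B ζ + PfunC co N₀ 0 * A ζ with hh₂def
      have hFrec' : ∀ z ∈ nbhd k ν (n+1),
          F (n+1) z = (c:ℂ) + segInt g₁ (d:ℂ) z + segInt B (d:ℂ) z :=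
        fun z hz => hFrec n hn z hz
      have hΨU : DifferentiableOn ℂ Ψ (nbhd k ν (n+1)) := hΨ.mono hUμ
      have hΨmaps : MapsTo Ψ (nbhd k ν (n+1)) (nbhd k ν n) :=
        fun z hz => hνΨ n hn (mem_image_of_mem Ψ hz)
      have hFnΨ : DifferentiableOn ℂ (fun ζ => F n (Ψ ζ)) (nbhd k ν (n+1)) :=
        ihdiff.comp hΨU hΨmaps
      have hPF : DifferentiableOn ℂ (fun ζ => PfunC co N₀ (F n (Ψ ζ))) (nbhd k ν (n+1)) :=
        (PfunC_diff co N₀).comp_differentiableOn hFnΨ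
      have hAU : DifferentiableOn ℂ A (nbhd k ν (n+1)) := hA.mono hUμ
      have hBU : DifferentiableOn ℂ B (nbhd k ν (n+1)) := hB.mono hUμ
      have hgdiff : DifferentiableOn ℂ g (nbhd k ν (n+1)) := (hAU.mul hPF).add hBU
      have hg₁cont : ContinuousOn g₁ (nbhd k ν (n+1)) := (hAU.mul hPF).continuousOn
      have hh₁cont : ContinuousOn h₁ (nbhd k ν (n+1)) :=
        hAU.continuousOn.mul (hPF.continuousOn.sub continuousOn_const)
      have hh₂cont : ContinuousOn h₂ (nbhd k ν (n+1)) :=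
        hBU.continuousOn.add (continuousOn_const.mul hAU.continuousOn)
      have hsegint : ∀ (f : ℂ → ℂ), ContinuousOn f (nbhd k ν (n+1)) →
          ∀ z ∈ nbhd k ν (n+1),
          IntervalIntegrable (fun t : ℝ => f ((d:ℂ) + (t:ℂ) * (z - (d:ℂ))))
            MeasureTheory.volume 0 1 := by
        intro f hf z hz
        have hγc : Continuous (fun t : ℝ => (d:ℂ) + (t:ℂ) * (z - (d:ℂ))) :=
          continuous_const.add (Complex.continuous_ofReal.mul continuous_const)
        have hmaps : MapsTo (fun t : ℝ => (d:ℂ) + (t:ℂ) * (z - (d:ℂ)))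
            (Icc (0:ℝ) 1) (nbhd k ν (n+1)) :=
          fun t ht => gamma_mem hUconv hdU hz ht
        exact ((hf.comp hγc.continuousOn hmaps).mono (le_of_eq uIcc01)).intervalIntegrable
      have hF1eq : ∀ z ∈ nbhd k ν (n+1), F (n+1) z = (c:ℂ) + segInt g (d:ℂ) z := by
        intro z hz
        rw [hFrec' z hz]
        have heq : segInt g (d:ℂ) z = segInt g₁ (d:ℂ) z + segInt B (d:ℂ) z := by
          have hadd := segInt_add (f := g₁) (h := B) (w := (d:ℂ)) (z := z)
            (hsegint g₁ hg₁cont z hz) (hsegint B hBU.continuousOn z hz)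
          rw [← hadd]
        rw [heq]
        ring
      have hderivAt : ∀ z ∈ nbhd k ν (n+1), HasDerivAt (F (n+1)) (g z) z := by
        intro z hz
        have hp : HasDerivAt (fun w => (c:ℂ) + segInt g (d:ℂ) w) (g z) z :=
          (segInt_hasDerivAt hUopen hUconv hgdiff hdU hz).const_add (c:ℂ)
        refine HasDerivAt.congr_of_eventuallyEq hp ?_
        filter_upwards [hUopen.mem_nhds hz] with w hw
        exact hF1eq w hw
      have claim1 : DifferentiableOn ℂ (F (n+1)) (nbhd k ν (n+1)) :=
        fun z hz => (hderivAt z hz).differentiableAt.differentiableWithinAt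
      -- real-variable facts
      have hFnreal : ∀ s : ℝ, s ∈ Icc (-1:ℝ) 1 →
          (F n (Ψ (s:ℂ))).im = 0 ∧ ‖F n (Ψ (s:ℂ))‖ ≤ r₀ := by
        intro s hs
        obtain ⟨y, hy, hyeq⟩ := hΨseg _ (mem_seg hs)
        rw [← hyeq]
        exact ihseg y hy
      have hFnre : ∀ s : ℝ, s ∈ Icc (-1:ℝ) 1 →
          F n (Ψ (s:ℂ)) = (((F n (Ψ (s:ℂ))).re : ℝ) : ℂ) :=
        fun s hs => real_of_im_zero (hFnreal s hs).1
      have hh₁real : ∀ s : ℝ, s ∈ Icc (-1:ℝ) 1 →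
          h₁ (s:ℂ) = ((a s * (Pfun co N₀ ((F n (Ψ (s:ℂ))).re) - co 0) : ℝ) : ℂ) := by
        intro s hs
        simp only [hh₁def]
        rw [hAre s hs, hFnre s hs, PfunC_ofReal, PfunC_zero]
        push_cast
        simp only [Complex.ofReal_re]
        try ring
      have hh₂real : ∀ s : ℝ, s ∈ Icc (-1:ℝ) 1 →
          h₂ (s:ℂ) = ((b s + co 0 * a s : ℝ) : ℂ) := by
        intro s hs
        simp only [hh₂def]
        rw [hAre s hs, hBre s hs, PfunC_zero]
        push_cast
        ring
      -- on the segment F (n+1) is real with absolute value at most r₀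
      have claim2 : ∀ x : ℝ, x ∈ Icc (-1:ℝ) 1 →
          (F (n+1) (x:ℂ)).im = 0 ∧ ‖F (n+1) (x:ℂ)‖ ≤ r₀ := by
        intro x hx
        have hxU : (x:ℂ) ∈ nbhd k ν (n+1) := hsegU (mem_seg hx)
        have hsplit : F (n+1) (x:ℂ)
            = (c:ℂ) + (segInt h₁ (d:ℂ) (x:ℂ) + segInt h₂ (d:ℂ) (x:ℂ)) := by
          rw [hF1eq _ hxU]
          congr 1
          rw [← segInt_add (hsegint h₁ hh₁cont _ hxU) (hsegint h₂ hh₂cont _ hxU)]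
          refine segInt_congr (fun t ht => ?_)
          simp only [hgdef, hh₁def, hh₂def]
          ring
        have hptIcc : ∀ t : ℝ, t ∈ Icc (0:ℝ) 1 → d + t * (x - d) ∈ Icc (-1:ℝ) 1 :=
          fun t ht => gamma_mem_Icc hd hx ht
        constructor
        · rw [hsplit, Complex.add_im, Complex.add_im, Complex.ofReal_im]
          have i1 : (segInt h₁ (d:ℂ) (x:ℂ)).im = 0 := by
            refine segInt_im_zero (fun t ht => ?_) (hsegint h₁ hh₁cont _ hxU)
            rw [cast_gamma, hh₁real _ (hptIcc t ht)]
            exact Complex.ofReal_im _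
          have i2 : (segInt h₂ (d:ℂ) (x:ℂ)).im = 0 := by
            refine segInt_im_zero (fun t ht => ?_) (hsegint h₂ hh₂cont _ hxU)
            rw [cast_gamma, hh₂real _ (hptIcc t ht)]
            exact Complex.ofReal_im _
          rw [i1, i2]
          ring
        · have hh₁Icc : ContinuousOn (fun t : ℝ => h₁ (t:ℂ)) (Icc (-1:ℝ) 1) :=
            hh₁cont.comp Complex.continuous_ofReal.continuousOn
              (fun t ht => hsegU (mem_seg ht))
          have hh₂Icc : ContinuousOn (fun t : ℝ => h₂ (t:ℂ)) (Icc (-1:ℝ) 1) :=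
            hh₂cont.comp Complex.continuous_ofReal.continuousOn
              (fun t ht => hsegU (mem_seg ht))
          have bound1 : ‖segInt h₁ (d:ℂ) (x:ℂ)‖ ≤ norm1 a * Pbar co N₀ r₀ := by
            have hb := segInt_abs_le (bnd := fun t => |a t| * Pbar co N₀ r₀) hd hx hh₁Icc
              (hacontIcc.abs.mul continuousOn_const) ?_ ?_
            · refine hb.trans ?_
              rw [intervalIntegral.integral_mul_const]
              exact le_of_eq rfl
            · intro t ht
              simp only [hh₁def]
              rw [norm_mul]
              have hA1 : ‖A (t:ℂ)‖ = |a t| := by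
                rw [hAre t ht, Complex.norm_real, Real.norm_eq_abs]
              rw [hA1]
              refine mul_le_mul_of_nonneg_left ?_ (abs_nonneg _)
              refine (PfunC_sub_zero_bound co N₀ _).trans ?_
              exact Pbar_mono co N₀ (norm_nonneg _) (hFnreal t ht).2
            · intro t ht
              exact mul_nonneg (abs_nonneg _) (Pbar_nonneg co N₀ hr₀nn)
          have bound2 : ‖segInt h₂ (d:ℂ) (x:ℂ)‖
              ≤ norm1 (fun t => b t + Pfun co N₀ 0 * a t) := by
            have hb := segInt_abs_le (bnd := fun t => |b t + Pfun co N₀ 0 * a t|) hd hx hh₂Icc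
              ((hbcontIcc.add (continuousOn_const.mul hacontIcc)).abs) ?_ ?_
            · exact hb.trans (le_of_eq rfl)
            · intro t ht
              rw [hh₂real t ht, Complex.norm_real, Real.norm_eq_abs, Pfun_zero]
            · intro t ht
              exact abs_nonneg _
          rw [hsplit]
          calc ‖(c:ℂ) + (segInt h₁ (d:ℂ) (x:ℂ) + segInt h₂ (d:ℂ) (x:ℂ))‖
              ≤ ‖(c:ℂ)‖
                + ‖segInt h₁ (d:ℂ) (x:ℂ) + segInt h₂ (d:ℂ) (x:ℂ)‖ :=
                norm_add_le _ _
            _ ≤ |c| + (‖segInt h₁ (d:ℂ) (x:ℂ)‖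
                + ‖segInt h₂ (d:ℂ) (x:ℂ)‖) := by
                rw [Complex.norm_real, Real.norm_eq_abs]
                exact add_le_add_right (norm_add_le _ _) _
            _ ≤ |c| + (norm1 a * Pbar co N₀ r₀
                + norm1 (fun t => b t + Pfun co N₀ 0 * a t)) :=
                add_le_add_right (add_le_add bound1 bound2) _
            _ = r₀ := by
                conv_rhs => rw [hr₀eq]
                ring
      -- bound on the s₁ neighborhood
      have hVU : nbhd k s₁ (n+1) ⊆ nbhd k ν (n+1) := nbhd_mono hs₁ν.le
      have hVμ2 : nbhd k s₁ (n+1) ⊆ Metric.thickening (μ/2) seg :=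
        nbhd_subset_thickening hk hn1 hs₁0.le (by linarith)
      have hrpn : 0 < (n:ℝ) ^ (-(1:ℝ)/k) := rpow_pos hk hn
      have hgbound : ∀ ζ ∈ nbhd k s₁ (n+1), ‖g ζ‖ ≤ ω (n+1) := by
        intro ζ hζ
        have hζμ : ζ ∈ Metric.thickening (μ/2) seg := hVμ2 hζ
        have hΨζ : Ψ ζ ∈ nbhd k s₁ n := hs₁Ψ n hn (mem_image_of_mem Ψ hζ)
        have hFb : ‖F n (Ψ ζ)‖ ≤ r₀ + ω n * (s₁ * (n:ℝ) ^ (-(1:ℝ)/k)) := by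
          obtain ⟨y, hyS, hyd⟩ := hScomp.exists_infDist_eq_dist hSne (F n (Ψ ζ))
          have h1 : Metric.infDist (F n (Ψ ζ)) S ≤ ω n * (s₁ * (n:ℝ) ^ (-(1:ℝ)/k)) :=
            ihbound _ hΨζ
          have h2 : ‖F n (Ψ ζ) - y‖ = dist (F n (Ψ ζ)) y := (Complex.dist_eq _ _).symm
          calc ‖F n (Ψ ζ)‖ = ‖y + (F n (Ψ ζ) - y)‖ := by ring_nf
            _ ≤ ‖y‖ + ‖F n (Ψ ζ) - y‖ := norm_add_le _ _
            _ ≤ r₀ + ω n * (s₁ * (n:ℝ) ^ (-(1:ℝ)/k)) := by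
                refine add_le_add (hSabs y hyS) ?_
                rw [h2, ← hyd]
                exact h1
        have hgsplit : g ζ = h₁ ζ + h₂ ζ := by
          simp only [hgdef, hh₁def, hh₂def]
          ring
        have harg0 : 0 ≤ r₀ + ω n * (s₁ * (n:ℝ) ^ (-(1:ℝ)/k)) :=
          add_nonneg hr₀nn (mul_nonneg ihω.1 (mul_nonneg hs₁0.le hrpn.le))
        have e1 : ‖h₁ ζ‖
            ≤ Ma * Pbar co N₀ (r₀ + ω n * (s₁ * (n:ℝ) ^ (-(1:ℝ)/k))) := by
          simp only [hh₁def]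
          rw [norm_mul]
          refine mul_le_mul (hMabd ζ hζμ) ?_ (norm_nonneg _) hMa0
          refine (PfunC_sub_zero_bound co N₀ _).trans ?_
          exact Pbar_mono co N₀ (norm_nonneg _) hFb
        have e2 : ‖h₂ ζ‖ ≤ Mb := hMbbd ζ hζμ
        have hargeq : r₀ + ω n * (s₁ * (n:ℝ) ^ (-(1:ℝ)/k))
            = r₀ + s₁ * (n:ℝ) ^ (-(1:ℝ)/k) * ω n := by ring
        calc ‖g ζ‖ = ‖h₁ ζ + h₂ ζ‖ := by rw [hgsplit]
          _ ≤ ‖h₁ ζ‖ + ‖h₂ ζ‖ := norm_add_le _ _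
          _ ≤ Ma * Pbar co N₀ (r₀ + ω n * (s₁ * (n:ℝ) ^ (-(1:ℝ)/k))) + Mb := add_le_add e1 e2
          _ = ω (n+1) := by rw [hargeq, ← hωrec n hn]
      have hω0' : 0 ≤ ω (n+1) := by
        rw [hωrec n hn]
        have harg : 0 ≤ r₀ + s₁ * (n:ℝ) ^ (-(1:ℝ)/k) * ω n :=
          add_nonneg hr₀nn (mul_nonneg (mul_nonneg hs₁0.le hrpn.le) ihω.1)
        exact add_nonneg (mul_nonneg hMa0 (Pbar_nonneg co N₀ harg)) hMb0
      have claim3 : ∀ z ∈ nbhd k s₁ (n+1),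
          Metric.infDist (F (n+1) z) S ≤ ω (n+1) * (s₁ * ((n+1:ℕ):ℝ) ^ (-(1:ℝ)/k)) := by
        intro z hz
        obtain ⟨p, hpseg, hpd⟩ := seg_compact.exists_infDist_eq_dist seg_nonempty z
        have hdistlt : dist z p < s₁ * ((n+1:ℕ):ℝ) ^ (-(1:ℝ)/k) := by
          rw [← hpd]
          exact hz
        have hpV : p ∈ nbhd k s₁ (n+1) := seg_subset_nbhd hs₁0 hn1 hpseg
        have hmv := Convex.norm_image_sub_le_of_norm_hasDerivWithin_le
          (f := F (n+1)) (f' := g) (s := nbhd k s₁ (n+1)) (C := ω (n+1))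
          (fun w hw => (hderivAt w (hVU hw)).hasDerivWithinAt)
          (fun w hw => by simpa using hgbound w hw)
          nbhd_convex hpV hz
        obtain ⟨y₀, hy₀, hy₀eq⟩ := hpseg
        have hFp : F (n+1) p ∈ S := by
          rw [← hy₀eq]
          obtain ⟨him, habs⟩ := claim2 y₀ hy₀
          exact hmemS _ him habs
        calc Metric.infDist (F (n+1) z) S ≤ dist (F (n+1) z) (F (n+1) p) :=
            Metric.infDist_le_dist_of_mem hFp
          _ = ‖F (n+1) z - F (n+1) p‖ := by rw [dist_eq_norm]
          _ ≤ ω (n+1) * ‖z - p‖ := hmv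
          _ = ω (n+1) * dist z p := by rw [dist_eq_norm]
          _ ≤ ω (n+1) * (s₁ * ((n+1:ℕ):ℝ) ^ (-(1:ℝ)/k)) :=
            mul_le_mul_of_nonneg_left hdistlt.le hω0'
      have hωC : ω (n+1) ≤ C := by
        rw [hωrec n hn]
        have hx0 : 0 ≤ s₁ * (n:ℝ) ^ (-(1:ℝ)/k) * ω n :=
          add_nonneg (le_refl 0) (mul_nonneg (mul_nonneg hs₁0.le hrpn.le) ihω.1) |>.trans_eq
            (zero_add _)
        have hx1 : s₁ * (n:ℝ) ^ (-(1:ℝ)/k) * ω n ≤ 1 := by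
          have ha1' : s₁ * (n:ℝ) ^ (-(1:ℝ)/k) ≤ (1/C) * 1 :=
            mul_le_mul hs₁C (rpow_le_one hk hn) hrpn.le (by positivity)
          have ha2 : s₁ * (n:ℝ) ^ (-(1:ℝ)/k) * ω n ≤ (1/C) * 1 * C :=
            mul_le_mul ha1' ihω.2 ihω.1 (by positivity)
          calc s₁ * (n:ℝ) ^ (-(1:ℝ)/k) * ω n ≤ (1/C) * 1 * C := ha2
            _ = 1 := by field_simp
        have := hCQ _ hx0
        rwa [max_eq_right hx1, one_pow, mul_one] at this
      exact ⟨claim1, claim2, claim3, hω0', hωC⟩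
  -- conclusion
  intro n hn
  obtain ⟨h1, _, h3, _, hωC⟩ := key n hn
  refine ⟨h1, h3, fun z hz => (h3 z hz).trans ?_⟩
  have hnn : 0 ≤ s₁ * (n:ℝ) ^ (-(1:ℝ)/k) :=
    mul_nonneg hs₁0.le (Real.rpow_nonneg (Nat.cast_nonneg n) _)
  exact mul_le_mul_of_nonneg_right hωC hnn
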